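/- Let m2 ≠ 0 be real, σ > 0, β real with σ^2 > 4β^2 and β ≠ 0. Define on the interval where L(t) = σ e^{2 m2 t} - β^2 e^{4 m2 t} - 1 > 0: a(t) = sqrt(L(t)), b(t) = β e^{2 m2 t}, c(t) = a(t) - a'(t)/m2. Then (i) a*c - b^2 = -1, (ii) a' - m2 (a - c) = 0, and (iii) b' - 2 m2 b = 0. -/

import Mathlib

theorem stmt_11 (m2 σ β : ℝ) (hm2 : m2 ≠ 0) (hσ : 0 < σ)
    (hdisc : σ ^ 2 > 4 * β ^ 2) (hβ : β ≠ 0)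
    (L a b c : ℝ → ℝ)
    (hL : ∀ t, L t = σ * Real.exp (2 * m2 * t) - β ^ 2 * Real.exp (4 * m2 * t) - 1)
    (ha : ∀ t, a t = Real.sqrt (L t))
    (hb : ∀ t, b t = β * Real.exp (2 * m2 * t))
    (hc : ∀ t, c t = a t - deriv a t / m2) :
    ∀ t, L t > 0 →
      a t * c t - (b t) ^ 2 = -1 ∧
      deriv a t - m2 * (a t - c t) = 0 ∧
      deriv b t - 2 * m2 * b t = 0 := by
  intro t ht
  have hLfun : L = fun t => σ * Real.exp (2 * m2 * t) - β ^ 2 * Real.exp (4 * m2 * t) - 1 :=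
    funext hL
  have hafun : a = fun t => Real.sqrt (L t) := funext ha
  have hbfun : b = fun t => β * Real.exp (2 * m2 * t) := funext hb
  -- derivative of L
  have hL' : HasDerivAt L (2 * m2 * (σ * Real.exp (2 * m2 * t))
      - 4 * m2 * (β ^ 2 * Real.exp (4 * m2 * t))) t := by
    rw [hLfun]
    have h1 : HasDerivAt (fun t : ℝ => Real.exp (2 * m2 * t))
        (Real.exp (2 * m2 * t) * (2 * m2)) t := by
      exact (Real.hasDerivAt_exp _).comp t (by simpa using (hasDerivAt_id t).const_mul (2 * m2))
    have h2 : HasDerivAt (fun t : ℝ => Real.exp (4 * m2 * t))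
        (Real.exp (4 * m2 * t) * (4 * m2)) t := by
      exact (Real.hasDerivAt_exp _).comp t (by simpa using (hasDerivAt_id t).const_mul (4 * m2))
    have := ((h1.const_mul σ).sub (h2.const_mul (β ^ 2))).sub_const 1
    exact this.congr_deriv (by ring)
  have hLt : L t ≠ 0 := ne_of_gt ht
  have ha' : HasDerivAt a ((2 * m2 * (σ * Real.exp (2 * m2 * t))
      - 4 * m2 * (β ^ 2 * Real.exp (4 * m2 * t))) / (2 * Real.sqrt (L t))) t := by
    rw [hafun]
    have := (Real.hasDerivAt_sqrt hLt).comp t hL'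
    exact this.congr_deriv (by ring)
  have hda : deriv a t = (2 * m2 * (σ * Real.exp (2 * m2 * t))
      - 4 * m2 * (β ^ 2 * Real.exp (4 * m2 * t))) / (2 * Real.sqrt (L t)) := ha'.deriv
  have hb' : HasDerivAt b (2 * m2 * (β * Real.exp (2 * m2 * t))) t := by
    rw [hbfun]
    have h1 : HasDerivAt (fun t : ℝ => Real.exp (2 * m2 * t))
        (Real.exp (2 * m2 * t) * (2 * m2)) t := by
      exact (Real.hasDerivAt_exp _).comp t (by simpa using (hasDerivAt_id t).const_mul (2 * m2))
    exact (h1.const_mul β).congr_deriv (by ring)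
  have hdb : deriv b t = 2 * m2 * (β * Real.exp (2 * m2 * t)) := hb'.deriv
  have hsq : Real.sqrt (L t) ^ 2 = L t := Real.sq_sqrt ht.le
  have hs : Real.sqrt (L t) > 0 := Real.sqrt_pos.mpr ht
  refine ⟨?_, ?_, ?_⟩
  · rw [hc, ha, hb, hda]
    have hLt' := hL t
    have hE : Real.exp (4 * m2 * t) = Real.exp (2 * m2 * t) ^ 2 := by
      rw [← Real.exp_nat_mul]; ring_nf
    field_simp
    have hE4 : Real.exp (m2 * t * 4) = Real.exp (4 * m2 * t) := by ring_nf
    linear_combination (2 * β ^ 2) * hE + 2 * hsq + 2 * hLt' + (4 * β ^ 2) * hE4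
  · rw [hc]; field_simp; ring
  · rw [hdb, hb]; ring
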